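/- arXiv:2408.10103 — 4 statements merged into one kernel-verified Lean document; each statement's English description precedes it below -/
import Mathlib

section
/- For n = 3, the choice t_2 = 2t_1/5 and t_3 = t_1/15 (with t_1 ≠ 0) makes ε(k) = -2(t_1 cos k + t_2 cos 2k + t_3 cos 3k) satisfy ε^{(r)}(π) = 0 for r = 1,2,3,4,5 and ε^{(6)}(π) ≠ 0; i.e., k = π is a critical point of order exactly 6. -/
open Real

lemma hdC (a b c x : ℝ) :
    HasDerivAt (fun k => a * Real.cos k + b * Real.cos (2*k) + c * Real.cos (3*k))
      ((-a) * Real.sin x + (-2*b) * Real.sin (2*x) + (-3*c) * Real.sin (3*x)) x := by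
  have h1 := (Real.hasDerivAt_cos x).const_mul a
  have h2 := ((Real.hasDerivAt_cos (2*x)).comp x ((hasDerivAt_id x).const_mul 2)).const_mul b
  have h3 := ((Real.hasDerivAt_cos (3*x)).comp x ((hasDerivAt_id x).const_mul 3)).const_mul c
  have := (h1.add h2).add h3
  simp only [Pi.add_def, Function.comp_def] at this
  exact this.congr_deriv (by ring)

lemma hdS (a b c x : ℝ) :
    HasDerivAt (fun k => a * Real.sin k + b * Real.sin (2*k) + c * Real.sin (3*k))
      (a * Real.cos x + (2*b) * Real.cos (2*x) + (3*c) * Real.cos (3*x)) x := by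
  have h1 := (Real.hasDerivAt_sin x).const_mul a
  have h2 := ((Real.hasDerivAt_sin (2*x)).comp x ((hasDerivAt_id x).const_mul 2)).const_mul b
  have h3 := ((Real.hasDerivAt_sin (3*x)).comp x ((hasDerivAt_id x).const_mul 3)).const_mul c
  have := (h1.add h2).add h3
  simp only [Pi.add_def, Function.comp_def] at this
  exact this.congr_deriv (by ring)

lemma dC (a b c : ℝ) :
    deriv (fun k => a * Real.cos k + b * Real.cos (2*k) + c * Real.cos (3*k))
      = fun x => (-a) * Real.sin x + (-2*b) * Real.sin (2*x) + (-3*c) * Real.sin (3*x) :=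
  funext fun x => (hdC a b c x).deriv

lemma dS (a b c : ℝ) :
    deriv (fun k => a * Real.sin k + b * Real.sin (2*k) + c * Real.sin (3*k))
      = fun x => a * Real.cos x + (2*b) * Real.cos (2*x) + (3*c) * Real.cos (3*x) :=
  funext fun x => (hdS a b c x).deriv

lemma sin3pi : Real.sin (3 * Real.pi) = 0 := by
  rw [show (3:ℝ) * Real.pi = Real.pi + 2 * Real.pi by ring]
  simp [Real.sin_add]

lemma cos3pi : Real.cos (3 * Real.pi) = -1 := by
  rw [show (3:ℝ) * Real.pi = Real.pi + 2 * Real.pi by ring]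
  simp [Real.cos_add]

/-- For n = 3 with t₂ = 2t₁/5 and t₃ = t₁/15 (t₁ ≠ 0), the point k = π is a
critical point of ε(k) = -2(t₁ cos k + t₂ cos 2k + t₃ cos 3k) of order exactly
6: the derivatives of orders 1 through 5 vanish at π while the sixth does not. -/
theorem sixth_order_critical_point
    (t₁ t₂ t₃ : ℝ) (ht₁ : t₁ ≠ 0) (ht₂ : t₂ = 2 * t₁ / 5) (ht₃ : t₃ = t₁ / 15)
    (ε : ℝ → ℝ)
    (hε : ∀ k : ℝ, ε k =
      -2 * (t₁ * Real.cos k + t₂ * Real.cos (2 * k) + t₃ * Real.cos (3 * k))) :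
    (∀ r : ℕ, 1 ≤ r → r ≤ 5 → iteratedDeriv r ε Real.pi = 0) ∧
    iteratedDeriv 6 ε Real.pi ≠ 0 := by
  have e0 : ε = fun k => (-2*t₁) * Real.cos k + (-2*t₂) * Real.cos (2*k) + (-2*t₃) * Real.cos (3*k) := by
    funext k; rw [hε]; ring
  have h1 : iteratedDeriv 1 ε
      = fun x => (2*t₁) * Real.sin x + (4*t₂) * Real.sin (2*x) + (6*t₃) * Real.sin (3*x) := by
    rw [iteratedDeriv_one, e0, dC]; funext x; ring
  have h2 : iteratedDeriv 2 ε
      = fun x => (2*t₁) * Real.cos x + (8*t₂) * Real.cos (2*x) + (18*t₃) * Real.cos (3*x) := by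
    rw [iteratedDeriv_succ, h1, dS]; funext x; ring
  have h3 : iteratedDeriv 3 ε
      = fun x => (-2*t₁) * Real.sin x + (-16*t₂) * Real.sin (2*x) + (-54*t₃) * Real.sin (3*x) := by
    rw [iteratedDeriv_succ, h2, dC]; funext x; ring
  have h4 : iteratedDeriv 4 ε
      = fun x => (-2*t₁) * Real.cos x + (-32*t₂) * Real.cos (2*x) + (-162*t₃) * Real.cos (3*x) := by
    rw [iteratedDeriv_succ, h3, dS]; funext x; ring
  have h5 : iteratedDeriv 5 ε
      = fun x => (2*t₁) * Real.sin x + (64*t₂) * Real.sin (2*x) + (486*t₃) * Real.sin (3*x) := by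
    rw [iteratedDeriv_succ, h4, dC]; funext x; ring
  have h6 : iteratedDeriv 6 ε
      = fun x => (2*t₁) * Real.cos x + (128*t₂) * Real.cos (2*x) + (1458*t₃) * Real.cos (3*x) := by
    rw [iteratedDeriv_succ, h5, dS]; funext x; ring
  subst ht₂ ht₃
  constructor
  · intro r hr1 hr5
    interval_cases r
    · rw [h1]; simp [sin3pi]
    · rw [h2]; simp [cos3pi, Real.cos_two_pi]; ring
    · rw [h3]; simp [sin3pi]
    · rw [h4]; simp [cos3pi, Real.cos_two_pi]; ring
    · rw [h5]; simp [sin3pi]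
  · rw [h6]
    simp only [Real.cos_pi, Real.cos_two_pi, cos3pi]
    intro h
    apply ht₁
    nlinarith [h]
end

section
/- For n = 3 with t_1 = 1, t_2 = √3/4, t_3 = 1/4, the point k_* = arccos(-1/√12) satisfies ε'(k_*) = 0 and ε''(k_*) = 0 but ε'''(k_*) ≠ 0 for ε(k) = -2(cos k + (√3/4) cos 2k + (1/4) cos 3k); i.e., k_* is a third-order critical point (saddle point). -/
open Real

noncomputable def f0 : ℝ → ℝ := fun k =>
  -2 * (Real.cos k + (Real.sqrt 3 / 4) * Real.cos (2 * k) + (1 / 4) * Real.cos (3 * k))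

noncomputable def f1 : ℝ → ℝ := fun k =>
  2 * (Real.sin k + (Real.sqrt 3 / 2) * Real.sin (2 * k) + (3 / 4) * Real.sin (3 * k))

noncomputable def f2 : ℝ → ℝ := fun k =>
  2 * (Real.cos k + Real.sqrt 3 * Real.cos (2 * k) + (9 / 4) * Real.cos (3 * k))

noncomputable def f3 : ℝ → ℝ := fun k =>
  -2 * (Real.sin k + 2 * Real.sqrt 3 * Real.sin (2 * k) + (27 / 4) * Real.sin (3 * k))

lemma h2lin (x : ℝ) : HasDerivAt (fun y : ℝ => 2 * y) 2 x := by
  simpa using (hasDerivAt_id x).const_mul (2 : ℝ)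

lemma h3lin (x : ℝ) : HasDerivAt (fun y : ℝ => 3 * y) 3 x := by
  simpa using (hasDerivAt_id x).const_mul (3 : ℝ)

lemma D0 (x : ℝ) : HasDerivAt f0 (f1 x) x := by
  have h := (((Real.hasDerivAt_cos x).add (((h2lin x).cos).const_mul (Real.sqrt 3 / 4))).add
    (((h3lin x).cos).const_mul (1 / 4))).const_mul (-2 : ℝ)
  refine h.congr_deriv ?_
  simp only [f1]; ring

lemma D1 (x : ℝ) : HasDerivAt f1 (f2 x) x := by
  have h := (((Real.hasDerivAt_sin x).add (((h2lin x).sin).const_mul (Real.sqrt 3 / 2))).add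
    (((h3lin x).sin).const_mul (3 / 4))).const_mul (2 : ℝ)
  refine h.congr_deriv ?_
  simp only [f2]; ring

lemma D2 (x : ℝ) : HasDerivAt f2 (f3 x) x := by
  have h := (((Real.hasDerivAt_cos x).add (((h2lin x).cos).const_mul (Real.sqrt 3))).add
    (((h3lin x).cos).const_mul (9 / 4))).const_mul (2 : ℝ)
  refine h.congr_deriv ?_
  simp only [f3]; ring

/-- For ε(k) = -2(cos k + (√3/4) cos 2k + (1/4) cos 3k), the point
k_* = arccos(-1/√12) is a third-order critical point (saddle point):
ε'(k_*) = ε''(k_*) = 0 but ε'''(k_*) ≠ 0. -/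
theorem third_order_saddle
    (ε : ℝ → ℝ)
    (hε : ∀ k : ℝ, ε k =
      -2 * (Real.cos k + (Real.sqrt 3 / 4) * Real.cos (2 * k)
        + (1 / 4) * Real.cos (3 * k)))
    (kstar : ℝ) (hk : kstar = Real.arccos (-1 / Real.sqrt 12)) :
    iteratedDeriv 1 ε kstar = 0 ∧ iteratedDeriv 2 ε kstar = 0 ∧
      iteratedDeriv 3 ε kstar ≠ 0 := by
  have hεf : ε = f0 := funext hε
  subst hεf
  subst hk
  set k := Real.arccos (-1 / Real.sqrt 12) with hkdef
  have E1 : iteratedDeriv 1 f0 = f1 := by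
    rw [iteratedDeriv_one]; exact funext fun x => (D0 x).deriv
  have E2 : iteratedDeriv 2 f0 = f2 := by
    rw [show (2:ℕ) = 1 + 1 from rfl, iteratedDeriv_succ, E1]
    exact funext fun x => (D1 x).deriv
  have E3 : iteratedDeriv 3 f0 = f3 := by
    rw [show (3:ℕ) = 2 + 1 from rfl, iteratedDeriv_succ, E2]
    exact funext fun x => (D2 x).deriv
  -- numerics
  have hspos : (0:ℝ) < Real.sqrt 3 := Real.sqrt_pos.2 (by norm_num)
  have hs2 : Real.sqrt 3 ^ 2 = 3 := Real.sq_sqrt (by norm_num)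
  have hs1 : (1:ℝ) ≤ Real.sqrt 3 := by nlinarith
  have h12 : Real.sqrt 12 = 2 * Real.sqrt 3 := by
    rw [show (12:ℝ) = 2^2 * 3 by norm_num, Real.sqrt_mul (by positivity),
      Real.sqrt_sq (by norm_num)]
  have hb1 : (-1:ℝ) ≤ -1 / Real.sqrt 12 := by
    rw [h12, neg_div, neg_le_neg_iff, div_le_one (by positivity)]
    linarith
  have hb2 : (-1:ℝ) / Real.sqrt 12 ≤ 1 := by
    rw [h12, div_le_iff₀ (by positivity)]
    nlinarith
  have hc : Real.cos k = -1 / (2 * Real.sqrt 3) := by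
    rw [hkdef, Real.cos_arccos hb1 hb2, h12]
  have hc2 : Real.cos k ^ 2 = 1 / 12 := by
    rw [hc]; field_simp; nlinarith
  have hsc : Real.sqrt 3 * Real.cos k = -1/2 := by
    rw [hc]; field_simp
  have hpyth : Real.sin k ^ 2 + Real.cos k ^ 2 = 1 := Real.sin_sq_add_cos_sq k
  have hS2 : Real.sin k ^ 2 = 11 / 12 := by linarith
  have hSpos : 0 < Real.sin k := by
    rw [hkdef]
    apply Real.sin_pos_of_pos_of_lt_pi
    · apply Real.arccos_pos.2
      rw [h12, div_lt_iff₀ (by positivity)]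
      nlinarith
    · apply lt_of_le_of_ne (Real.arccos_le_pi _)
      intro h
      have hco := Real.cos_arccos hb1 hb2
      rw [h, Real.cos_pi, h12] at hco
      field_simp at hco
      nlinarith
  refine ⟨?_, ?_, ?_⟩
  · rw [E1]
    simp only [f1, Real.sin_two_mul, Real.sin_three_mul]
    linear_combination (2 * Real.sin k) * hsc + (-6 * Real.sin k) * hS2
  · rw [E2]
    simp only [f2, Real.cos_two_mul, Real.cos_three_mul]
    linear_combination (4 * Real.cos k) * hsc + (18 * Real.cos k) * hc2
      - (4 * Real.sqrt 3) * hsc + (4 * Real.cos k) * hs2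
  · rw [E3]
    have hval : f3 k = 11 * Real.sin k := by
      simp only [f3, Real.sin_two_mul, Real.sin_three_mul]
      linear_combination (-8 * Real.sin k) * hsc + (54 * Real.sin k) * hS2
    rw [hval]
    positivity
end

section
/- For the trigonometric polynomial ε(k) = -2 Σ_{m=1}^n t_m cos(mk) with t_n ≠ 0, the order p of any critical point at real k₀ is at most 2n; i.e., it is impossible that all derivatives ε^{(r)}(k₀) vanish for r = 1,…,2n. -/
open Real Finset

lemma cos_add_nat_pi (x : ℝ) (j : ℕ) :
    Real.cos (x + (j:ℝ) * Real.pi) = (-1)^j * Real.cos x := by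
  induction j with
  | zero => simp
  | succ j ih =>
    push_cast
    rw [show x + ((j:ℝ)+1) * Real.pi = (x + (j:ℝ)*Real.pi) + Real.pi by ring,
      Real.cos_add_pi, ih]
    ring

-- iterated derivative formula
lemma iter_formula (n : ℕ) (t : ℕ → ℝ) (ε : ℝ → ℝ)
    (hε : ∀ k : ℝ, ε k = -2 * ∑ m ∈ Finset.Icc 1 n, t m * Real.cos (m * k)) (r : ℕ) :
    iteratedDeriv r ε = fun k => -2 * ∑ m ∈ Finset.Icc 1 n,
      t m * ((m:ℝ)^r * Real.cos ((m:ℝ) * k + (r:ℝ) * (Real.pi/2))) := by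
  induction r with
  | zero =>
    funext k
    simp [hε k]
  | succ r ih =>
    rw [iteratedDeriv_succ, ih]
    funext k
    have hd : ∀ m : ℕ, HasDerivAt (fun k : ℝ => t m * ((m:ℝ)^r * Real.cos ((m:ℝ) * k + (r:ℝ) * (Real.pi/2))))
        (t m * ((m:ℝ)^(r+1) * Real.cos ((m:ℝ) * k + ((r:ℝ)+1) * (Real.pi/2)))) k := by
      intro m
      have h1 : HasDerivAt (fun k : ℝ => (m:ℝ) * k + (r:ℝ) * (Real.pi/2)) (m:ℝ) k := by
        simpa using ((hasDerivAt_id k).const_mul (m:ℝ)).add_const ((r:ℝ) * (Real.pi/2))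
      have h2 := (Real.hasDerivAt_cos ((m:ℝ) * k + (r:ℝ) * (Real.pi/2))).comp k h1
      have h3 := (h2.const_mul ((m:ℝ)^r)).const_mul (t m)
      refine h3.congr_deriv ?_
      rw [show ((r:ℝ)+1) * (Real.pi/2) = (r:ℝ) * (Real.pi/2) + Real.pi/2 by ring,
        show (m:ℝ) * k + ((r:ℝ) * (Real.pi/2) + Real.pi/2) = ((m:ℝ)*k + (r:ℝ)*(Real.pi/2)) + Real.pi/2 by ring,
        Real.cos_add_pi_div_two]
      ring
    have hsum : HasDerivAt (fun k : ℝ => -2 * ∑ m ∈ Finset.Icc 1 n,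
        t m * ((m:ℝ)^r * Real.cos ((m:ℝ) * k + (r:ℝ) * (Real.pi/2))))
        (-2 * ∑ m ∈ Finset.Icc 1 n, t m * ((m:ℝ)^(r+1) * Real.cos ((m:ℝ) * k + ((r:ℝ)+1) * (Real.pi/2)))) k := by
      exact (HasDerivAt.fun_sum (fun m _ => hd m)).const_mul (-2)
    rw [hsum.deriv]
    congr 1
    refine Finset.sum_congr rfl fun m _ => ?_
    push_cast
    ring

-- the Vandermonde-style extraction
open Polynomial in
lemma key_extract (n : ℕ) (hn : 1 ≤ n) (y : ℕ → ℝ)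
    (h : ∀ j < n, ∑ m ∈ Finset.Icc 1 n, y m * ((m:ℝ)^2)^j = 0) :
    y n = 0 := by
  set Q : ℝ[X] := ∏ m' ∈ Finset.Icc 1 (n-1), (X - C ((m':ℝ)^2)) with hQ
  have hdeg : Q.natDegree < n := by
    have h1 : Q.natDegree ≤ ∑ m' ∈ Finset.Icc 1 (n-1), (X - C ((m':ℝ)^2)).natDegree :=
      Polynomial.natDegree_prod_le _ _
    simp only [natDegree_X_sub_C] at h1
    simp only [Finset.sum_const, smul_eq_mul, mul_one] at h1
    have : (Finset.Icc 1 (n-1)).card = n - 1 := by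
      rw [Nat.card_Icc]; omega
    omega
  have h1 : ∑ m ∈ Finset.Icc 1 n, y m * Q.eval ((m:ℝ)^2) = 0 := by
    have hev : ∀ m : ℕ, Q.eval ((m:ℝ)^2) = ∑ j ∈ Finset.range n, Q.coeff j * ((m:ℝ)^2)^j :=
      fun m => eval_eq_sum_range' hdeg _
    simp_rw [hev, Finset.mul_sum]
    rw [Finset.sum_comm]
    apply Finset.sum_eq_zero
    intro j hj
    have : ∀ m ∈ Finset.Icc 1 n, y m * (Q.coeff j * ((m:ℝ)^2)^j) = Q.coeff j * (y m * ((m:ℝ)^2)^j) := by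
      intros; ring
    rw [Finset.sum_congr rfl this, ← Finset.mul_sum, h j (Finset.mem_range.mp hj), mul_zero]
  have h2 : ∑ m ∈ Finset.Icc 1 n, y m * Q.eval ((m:ℝ)^2) = y n * Q.eval ((n:ℝ)^2) := by
    apply Finset.sum_eq_single_of_mem n (by simp [hn])
    intro m hm hmn
    have hm' : m ∈ Finset.Icc 1 (n-1) := by
      simp only [Finset.mem_Icc] at hm ⊢; omega
    have hz : Q.eval ((m:ℝ)^2) = 0 := by
      rw [hQ, eval_prod]
      apply Finset.prod_eq_zero hm'
      simp
    rw [hz, mul_zero]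
  have h3 : Q.eval ((n:ℝ)^2) ≠ 0 := by
    rw [hQ, eval_prod]
    apply Finset.prod_ne_zero_iff.mpr
    intro m' hm'
    simp only [eval_sub, eval_X, eval_C]
    have hlt : m' < n := by simp only [Finset.mem_Icc] at hm'; omega
    have hlt' : (m':ℝ) < n := by exact_mod_cast hlt
    have h0 : (0:ℝ) ≤ m' := Nat.cast_nonneg m'
    nlinarith
  rw [h1] at h2
  exact (mul_eq_zero.mp h2.symm).resolve_right h3

/-- For ε(k) = -2 Σ_{m=1}^n t_m cos(mk) with t_n ≠ 0, the derivatives of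
orders 1 through 2n at a real point k₀ cannot all vanish; i.e. the order of
any critical point is at most 2n. -/
theorem critical_order_at_most_two_n
    (n : ℕ) (hn : 1 ≤ n) (t : ℕ → ℝ) (ht : t n ≠ 0) (ε : ℝ → ℝ)
    (hε : ∀ k : ℝ, ε k = -2 * ∑ m ∈ Finset.Icc 1 n, t m * Real.cos (m * k))
    (k₀ : ℝ) :
    ¬ (∀ r : ℕ, 1 ≤ r → r ≤ 2 * n → iteratedDeriv r ε k₀ = 0) := by
  intro h
  -- base: for every r in range, the raw sum vanishes
  have hS : ∀ r : ℕ, 1 ≤ r → r ≤ 2*n →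
      ∑ m ∈ Finset.Icc 1 n, t m * ((m:ℝ)^r * Real.cos ((m:ℝ) * k₀ + (r:ℝ) * (Real.pi/2))) = 0 := by
    intro r h1 h2
    have := h r h1 h2
    rw [iter_formula n t ε hε r] at this
    simp only at this
    linarith
  -- sin equations: r = 2j+1
  have hsin : ∀ j < n, ∑ m ∈ Finset.Icc 1 n, (t m * (m:ℝ) * Real.sin ((m:ℝ)*k₀)) * ((m:ℝ)^2)^j = 0 := by
    intro j hj
    have hr := hS (2*j+1) (by omega) (by omega)
    have hterm : ∀ m ∈ Finset.Icc 1 n,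
        t m * ((m:ℝ)^(2*j+1) * Real.cos ((m:ℝ) * k₀ + ((2*j+1:ℕ):ℝ) * (Real.pi/2)))
        = ((-1:ℝ))^(j+1) * ((t m * (m:ℝ) * Real.sin ((m:ℝ)*k₀)) * ((m:ℝ)^2)^j) := by
      intro m _
      have hc : Real.cos ((m:ℝ) * k₀ + ((2*j+1:ℕ):ℝ) * (Real.pi/2))
          = (-1)^j * (- Real.sin ((m:ℝ)*k₀)) := by
        push_cast
        rw [show (m:ℝ) * k₀ + (2*(j:ℝ)+1) * (Real.pi/2)
            = ((m:ℝ)*k₀ + Real.pi/2) + (j:ℝ)*Real.pi by ring,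
          cos_add_nat_pi, Real.cos_add_pi_div_two]
      rw [hc, show (m:ℝ)^(2*j+1) = ((m:ℝ)^2)^j * m by rw [pow_succ, pow_mul]]
      ring
    rw [Finset.sum_congr rfl hterm, ← Finset.mul_sum] at hr
    have : ((-1:ℝ))^(j+1) ≠ 0 := by positivity
    exact (mul_eq_zero.mp hr).resolve_left this
  -- cos equations: r = 2j+2
  have hcos : ∀ j < n, ∑ m ∈ Finset.Icc 1 n, (t m * (m:ℝ)^2 * Real.cos ((m:ℝ)*k₀)) * ((m:ℝ)^2)^j = 0 := by
    intro j hj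
    have hr := hS (2*j+2) (by omega) (by omega)
    have hterm : ∀ m ∈ Finset.Icc 1 n,
        t m * ((m:ℝ)^(2*j+2) * Real.cos ((m:ℝ) * k₀ + ((2*j+2:ℕ):ℝ) * (Real.pi/2)))
        = ((-1:ℝ))^(j+1) * ((t m * (m:ℝ)^2 * Real.cos ((m:ℝ)*k₀)) * ((m:ℝ)^2)^j) := by
      intro m _
      have hc : Real.cos ((m:ℝ) * k₀ + ((2*j+2:ℕ):ℝ) * (Real.pi/2))
          = (-1)^(j+1) * Real.cos ((m:ℝ)*k₀) := by
        push_cast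
        rw [show (m:ℝ) * k₀ + (2*(j:ℝ)+2) * (Real.pi/2)
            = (m:ℝ)*k₀ + (((j:ℕ)+1:ℕ):ℝ)*Real.pi by push_cast; ring,
          cos_add_nat_pi]
      rw [hc, show (m:ℝ)^(2*j+2) = ((m:ℝ)^2)^j * (m:ℝ)^2 by rw [← pow_mul, ← pow_add]]
      ring
    rw [Finset.sum_congr rfl hterm, ← Finset.mul_sum] at hr
    have : ((-1:ℝ))^(j+1) ≠ 0 := by positivity
    exact (mul_eq_zero.mp hr).resolve_left this
  have e1 : t n * (n:ℝ) * Real.sin ((n:ℝ)*k₀) = 0 :=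
    key_extract n hn _ hsin
  have e2 : t n * (n:ℝ)^2 * Real.cos ((n:ℝ)*k₀) = 0 :=
    key_extract n hn _ hcos
  have hn' : (n:ℝ) ≠ 0 := Nat.cast_ne_zero.mpr (by omega)
  have hs : Real.sin ((n:ℝ)*k₀) = 0 := by
    rcases mul_eq_zero.mp e1 with h' | h'
    · rcases mul_eq_zero.mp h' with h'' | h'' <;> [exact absurd h'' ht; exact absurd h'' hn']
    · exact h'
  have hc : Real.cos ((n:ℝ)*k₀) = 0 := by
    rcases mul_eq_zero.mp e2 with h' | h'
    · rcases mul_eq_zero.mp h' with h'' | h''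
      · exact absurd h'' ht
      · exact absurd h'' (pow_ne_zero 2 hn')
    · exact h'
  have := Real.sin_sq_add_cos_sq ((n:ℝ)*k₀)
  rw [hs, hc] at this
  norm_num at this
end

section
/- If ε(k) = -2 Σ_{m=1}^n t_m cos(mk) with t_n ≠ 0 has a critical point of order p > n at real k₀ (i.e., ε^{(r)}(k₀) = 0 for 1 ≤ r < p), then sin(k₀) = 0, i.e., k₀ ∈ {0, ±π} modulo 2π. -/
open Finset Complex Polynomial


open Finset

lemma iterDeriv_formula (n : ℕ) (t : ℕ → ℝ) :
    ∀ r : ℕ, iteratedDeriv r (fun k : ℝ => -2 * ∑ m ∈ Finset.Icc 1 n, t m * Real.cos (m * k))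
      = fun k : ℝ => -2 * ∑ m ∈ Finset.Icc 1 n,
          t m * ((m : ℝ) ^ r * Real.cos (m * k + r * (Real.pi / 2))) := by
  intro r
  induction r with
  | zero => simp
  | succ r ih =>
    rw [iteratedDeriv_succ, ih]
    funext k
    have H : HasDerivAt (fun k : ℝ => -2 * ∑ m ∈ Finset.Icc 1 n,
        t m * ((m : ℝ) ^ r * Real.cos (m * k + r * (Real.pi / 2))))
        (-2 * ∑ m ∈ Finset.Icc 1 n,
          t m * ((m : ℝ) ^ (r+1) * Real.cos (m * k + ((r+1 : ℕ):ℝ) * (Real.pi / 2)))) k := by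
      apply HasDerivAt.const_mul
      apply HasDerivAt.fun_sum
      intro m _
      have hinner : HasDerivAt (fun k : ℝ => (m : ℝ) * k + r * (Real.pi/2)) m k := by
        simpa using ((hasDerivAt_id k).const_mul (m:ℝ)).add_const ((r:ℝ) * (Real.pi/2))
      have hcos := hinner.cos
      have h2 := (hcos.const_mul ((m:ℝ)^r)).const_mul (t m)
      refine h2.congr_deriv ?_
      have harg : (m:ℝ) * k + ((r+1 : ℕ):ℝ) * (Real.pi/2)
          = ((m:ℝ) * k + r * (Real.pi/2)) + Real.pi/2 := by push_cast; ring
      rw [harg, Real.cos_add_pi_div_two]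
      ring
    exact H.deriv

open Finset Polynomial

lemma descFactorial_cast_prod (J i : ℕ) :
    ((J.descFactorial i : ℕ) : ℂ) = ∏ s ∈ Finset.range i, ((J:ℂ) - s) := by
  induction i with
  | zero => simp
  | succ i ih =>
    rw [Nat.descFactorial_succ, Finset.prod_range_succ, ← ih, Nat.cast_mul]
    by_cases h : i < J
    · rw [Nat.cast_sub h.le]; ring
    · push_neg at h
      rw [Nat.sub_eq_zero_of_le h, Nat.cast_zero, zero_mul]
      rcases eq_or_lt_of_le h with h' | h'
      · subst h'; simp
      · rw [Nat.descFactorial_eq_zero_iff_lt.mpr h', Nat.cast_zero, zero_mul]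

lemma iterate_derivative_add' (f g : ℂ[X]) (i : ℕ) :
    Polynomial.derivative^[i] (f + g)
      = Polynomial.derivative^[i] f + Polynomial.derivative^[i] g := by
  induction i with
  | zero => simp
  | succ i ih =>
    rw [Function.iterate_succ_apply', ih, Polynomial.derivative_add,
      ← Function.iterate_succ_apply' (⇑Polynomial.derivative) i f,
      ← Function.iterate_succ_apply' (⇑Polynomial.derivative) i g]

lemma iterate_derivative_finset_sum {s : Finset ℕ} (f : ℕ → ℂ[X]) (i : ℕ) :
    Polynomial.derivative^[i] (∑ m ∈ s, f m) = ∑ m ∈ s, Polynomial.derivative^[i] (f m) := by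
  induction i with
  | zero => simp
  | succ i ih =>
    rw [Function.iterate_succ_apply', ih, Polynomial.derivative_sum]
    exact Finset.sum_congr rfl fun m _ => (Function.iterate_succ_apply' _ _ _).symm


lemma key_exp (n : ℕ) (k₀ : ℝ) (m : ℕ) (hm : m ≤ n) (r : ℕ) :
    (m:ℂ)^r * (Complex.exp (k₀ * I))^(n+m) + (-(m:ℂ))^r * (Complex.exp (k₀ * I))^(n-m)
      = 2 * (-I)^r * ((m:ℂ)^r *
          Complex.cos ((((m:ℝ) * k₀ + r * (Real.pi/2) : ℝ)) : ℂ)) * (Complex.exp (k₀ * I))^n := by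
  set z : ℂ := Complex.exp (k₀ * I) with hzdef
  have hzpow : ∀ j : ℕ, z ^ j = Complex.exp ((j:ℂ) * ((k₀:ℂ) * I)) :=
    fun j => (Complex.exp_nat_mul _ j).symm
  set A : ℂ := Complex.exp ((m:ℂ) * (k₀:ℂ) * I) with hA
  set B : ℂ := Complex.exp (-((m:ℂ) * (k₀:ℂ) * I)) with hB
  have hAB : A * B = 1 := by
    rw [hA, hB, ← Complex.exp_add]; simp
  have e1 : z^(n+m) = A * z^n := by
    rw [hzpow, hzpow, hA, ← Complex.exp_add]; congr 1; push_cast; ring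
  have e2 : z^(n-m) = B * z^n := by
    rw [hzpow, hzpow, hB, ← Complex.exp_add]; congr 1
    push_cast [Nat.cast_sub hm]; ring
  have hexpI : Complex.exp ((((Real.pi/2 : ℝ)):ℂ) * I) = I := by
    rw [Complex.exp_mul_I]; push_cast; simp
  have hexpnegI : Complex.exp (-((((Real.pi/2 : ℝ)):ℂ) * I)) = -I := by
    rw [Complex.exp_neg, hexpI, Complex.inv_I]
  have hexpθ : Complex.exp ((((m:ℝ) * k₀ + r * (Real.pi/2) : ℝ) : ℂ) * I) = A * I^r := by
    rw [show ((((m:ℝ) * k₀ + r * (Real.pi/2) : ℝ) : ℂ) * I)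
        = (m:ℂ) * (k₀:ℂ) * I + (r:ℂ) * ((((Real.pi/2:ℝ)):ℂ) * I) by push_cast; ring,
      Complex.exp_add, Complex.exp_nat_mul, hexpI, hA]
  have hexpθ' : Complex.exp (-((((m:ℝ) * k₀ + r * (Real.pi/2) : ℝ) : ℂ)) * I) = B * (-I)^r := by
    rw [show (-((((m:ℝ) * k₀ + r * (Real.pi/2) : ℝ) : ℂ)) * I)
        = -((m:ℂ) * (k₀:ℂ) * I) + (r:ℂ) * (-((((Real.pi/2:ℝ)):ℂ) * I)) by push_cast; ring,
      Complex.exp_add, Complex.exp_nat_mul, hexpnegI, hB]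
  have hcos : Complex.cos ((((m:ℝ) * k₀ + r * (Real.pi/2) : ℝ)) : ℂ)
      = (A * I^r + B * (-I)^r) / 2 := by
    rw [← hexpθ, ← hexpθ', eq_div_iff (two_ne_zero), mul_comm, Complex.two_cos]
  have hII1 : (I:ℂ)^r * (-I)^r = 1 := by
    rw [← mul_pow]; simp
  have hII2 : ((-I):ℂ)^r * (-I)^r = (-1:ℂ)^r := by
    rw [← mul_pow]; norm_num [Complex.I_mul_I]
  have hmneg : (-(m:ℂ))^r = (-1:ℂ)^r * (m:ℂ)^r := by rw [neg_pow]
  rw [e1, e2, hcos, hmneg]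
  field_simp
  linear_combination (-(m:ℂ)^r * z^n * A) * hII1 + (-(m:ℂ)^r * z^n * B) * hII2



/-- If ε(k) = -2 Σ_{m=1}^n t_m cos(mk) with t_n ≠ 0 has a critical point of
order p > n at a real k₀ (all derivatives of orders 1,…,p-1 vanish at k₀),
then sin k₀ = 0, i.e. k₀ ∈ {0, ±π} modulo 2π. -/
theorem high_order_critical_point_at_band_edge
    (n : ℕ) (hn : 1 ≤ n) (t : ℕ → ℝ) (ht : t n ≠ 0)
    (p : ℕ) (hnp : n < p) (hp2n : p ≤ 2 * n) (ε : ℝ → ℝ)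
    (hε : ∀ k : ℝ, ε k = -2 * ∑ m ∈ Finset.Icc 1 n, t m * Real.cos (m * k))
    (k₀ : ℝ)
    (hder : ∀ r : ℕ, 1 ≤ r → r < p → iteratedDeriv r ε k₀ = 0) :
    Real.sin k₀ = 0 := by
  by_contra hs
  -- real derivative equations
  have hεf : ε = fun k : ℝ => -2 * ∑ m ∈ Finset.Icc 1 n, t m * Real.cos (m * k) := funext hε
  have hre : ∀ r : ℕ, 1 ≤ r → r < p →
      ∑ m ∈ Finset.Icc 1 n, t m * ((m:ℝ)^r * Real.cos (m * k₀ + r * (Real.pi/2))) = 0 := by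
    intro r h1 h2
    have h := hder r h1 h2
    rw [hεf, iterDeriv_formula n t r] at h
    simp only at h
    linarith
  set z : ℂ := Complex.exp (k₀ * I) with hzdef
  have hzne : z ≠ 0 := Complex.exp_ne_zero _
  set c : ℝ := ∑ m ∈ Finset.Icc 1 n, t m * ((m:ℝ)^0 * Real.cos (m * k₀ + (0:ℕ) * (Real.pi/2)))
    with hcdef
  -- the complexified sums
  have hsum : ∀ r : ℕ,
      ∑ m ∈ Finset.Icc 1 n, (t m:ℂ) * ((m:ℂ)^r * z^(n+m) + (-(m:ℂ))^r * z^(n-m))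
        = 2 * (-I)^r * z^n *
          ((∑ m ∈ Finset.Icc 1 n, t m * ((m:ℝ)^r * Real.cos (m * k₀ + r * (Real.pi/2))) : ℝ) : ℂ) := by
    intro r
    push_cast
    rw [Finset.mul_sum]
    refine Finset.sum_congr rfl fun m hm => ?_
    have hm' : m ≤ n := (Finset.mem_Icc.mp hm).2
    rw [key_exp n k₀ m hm' r]
    push_cast
    ring
  have hS : ∀ r : ℕ, r < p →
      (∑ m ∈ Finset.Icc 1 n, (t m:ℂ) * ((m:ℂ)^r * z^(n+m) + (-(m:ℂ))^r * z^(n-m)))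
        - 2*(c:ℂ) * (0:ℂ)^r * z^n = 0 := by
    intro r hr
    rcases Nat.eq_zero_or_pos r with rfl | hr1
    · rw [hsum 0, ← hcdef]
      simp only [pow_zero]
      ring
    · rw [hsum r, hre r hr1 hr]
      rw [zero_pow hr1.ne']
      simp
  -- the evaluation functional vanishes on polynomials of degree < p
  have hTq : ∀ q : ℂ[X], q.natDegree < p →
      (∑ m ∈ Finset.Icc 1 n, (t m:ℂ) * (q.eval (m:ℂ) * z^(n+m) + q.eval (-(m:ℂ)) * z^(n-m)))
        - 2*(c:ℂ) * q.eval 0 * z^n = 0 := by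
    intro q hq
    have hev : ∀ x : ℂ, q.eval x = ∑ r ∈ Finset.range p, q.coeff r * x^r :=
      fun x => Polynomial.eval_eq_sum_range' hq x
    have h1 : (∑ m ∈ Finset.Icc 1 n, (t m:ℂ) * (q.eval (m:ℂ) * z^(n+m) + q.eval (-(m:ℂ)) * z^(n-m)))
        = ∑ r ∈ Finset.range p, q.coeff r *
            (∑ m ∈ Finset.Icc 1 n, (t m:ℂ) * ((m:ℂ)^r * z^(n+m) + (-(m:ℂ))^r * z^(n-m))) := by
      calc ∑ m ∈ Finset.Icc 1 n, (t m:ℂ) * (q.eval (m:ℂ) * z^(n+m) + q.eval (-(m:ℂ)) * z^(n-m))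
          = ∑ m ∈ Finset.Icc 1 n, ∑ r ∈ Finset.range p,
              q.coeff r * ((t m:ℂ) * ((m:ℂ)^r * z^(n+m) + (-(m:ℂ))^r * z^(n-m))) := by
            refine Finset.sum_congr rfl fun m _ => ?_
            rw [hev (m:ℂ), hev (-(m:ℂ)), Finset.sum_mul, Finset.sum_mul,
              ← Finset.sum_add_distrib, Finset.mul_sum]
            exact Finset.sum_congr rfl fun r _ => by ring
        _ = ∑ r ∈ Finset.range p, ∑ m ∈ Finset.Icc 1 n,
              q.coeff r * ((t m:ℂ) * ((m:ℂ)^r * z^(n+m) + (-(m:ℂ))^r * z^(n-m))) :=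
            Finset.sum_comm
        _ = ∑ r ∈ Finset.range p, q.coeff r *
              (∑ m ∈ Finset.Icc 1 n, (t m:ℂ) * ((m:ℂ)^r * z^(n+m) + (-(m:ℂ))^r * z^(n-m))) :=
            Finset.sum_congr rfl fun r _ => (Finset.mul_sum _ _ _).symm
    have h2 : 2*(c:ℂ) * q.eval 0 * z^n
        = ∑ r ∈ Finset.range p, q.coeff r * (2*(c:ℂ) * (0:ℂ)^r * z^n) := by
      rw [hev 0, Finset.mul_sum, Finset.sum_mul]
      exact Finset.sum_congr rfl fun r _ => by ring
    rw [h1, h2, ← Finset.sum_sub_distrib]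
    refine Finset.sum_eq_zero fun r hr => ?_
    rw [← mul_sub, hS r (Finset.mem_range.mp hr), mul_zero]
  -- the palindromic polynomial
  set H : ℂ[X] := (∑ m ∈ Finset.Icc 1 n, C (t m:ℂ) * (X^(n+m) + X^(n-m)))
      - C (2*(c:ℂ)) * X^n with hHdef
  have hH0 : H ≠ 0 := by
    have hcoeff : H.coeff (2*n) = (t n : ℂ) := by
      rw [hHdef, Polynomial.coeff_sub, Polynomial.finset_sum_coeff]
      simp only [Polynomial.coeff_C_mul, Polynomial.coeff_add, Polynomial.coeff_X_pow]
      rw [Finset.sum_eq_single n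
        (fun m hm hne => by
          obtain ⟨h1m, hmn⟩ := Finset.mem_Icc.mp hm
          rw [if_neg (by omega), if_neg (by omega)]
          ring)
        (fun h => absurd (Finset.mem_Icc.mpr ⟨hn, le_rfl⟩) h)]
      rw [if_pos (by omega), if_neg (by omega), if_neg (by omega)]
      ring
    intro h
    rw [h, Polynomial.coeff_zero] at hcoeff
    exact ht (by exact_mod_cast hcoeff.symm)
  have hHdeg : H.natDegree ≤ 2*n := by
    rw [hHdef]
    refine le_trans (Polynomial.natDegree_sub_le _ _) (max_le ?_ ?_)
    · refine Polynomial.natDegree_sum_le_of_forall_le _ _ fun m hm => ?_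
      have hmn := (Finset.mem_Icc.mp hm).2
      refine le_trans (Polynomial.natDegree_C_mul_le _ _)
        (le_trans (Polynomial.natDegree_add_le _ _) (max_le ?_ ?_)) <;>
        rw [Polynomial.natDegree_X_pow] <;> omega
    · refine le_trans (Polynomial.natDegree_C_mul_le _ _) ?_
      rw [Polynomial.natDegree_X_pow]; omega
  -- z is a root of multiplicity ≥ p
  have hroot : ∀ i : ℕ, i ≤ p - 1 → (Polynomial.derivative^[i] H).IsRoot z := by
    intro i hip
    have hip' : i < p := by omega
    -- the auxiliary polynomial
    set q : ℂ[X] := ∏ s ∈ Finset.range i, (X + C ((n:ℂ) - s)) with hqdef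
    have hqd : q.natDegree < p := by
      refine lt_of_le_of_lt (le_trans (Polynomial.natDegree_prod_le _ _) ?_) hip'
      have hb : ∀ s ∈ Finset.range i, (X + C ((n:ℂ) - s)).natDegree ≤ 1 :=
        fun s _ => le_of_eq (Polynomial.natDegree_X_add_C _)
      exact le_trans (Finset.sum_le_sum hb) (by simp)
    have hqev : ∀ x : ℂ, q.eval x = ∏ s ∈ Finset.range i, (x + ((n:ℂ) - s)) := by
      intro x; rw [hqdef, Polynomial.eval_prod]; simp
    have hq1 : ∀ m : ℕ, q.eval (m:ℂ) = (((n+m).descFactorial i : ℕ) : ℂ) := by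
      intro m
      rw [hqev, descFactorial_cast_prod]
      exact Finset.prod_congr rfl fun s _ => by push_cast; ring
    have hq2 : ∀ m : ℕ, m ≤ n → q.eval (-(m:ℂ)) = (((n-m).descFactorial i : ℕ) : ℂ) := by
      intro m hm
      rw [hqev, descFactorial_cast_prod]
      exact Finset.prod_congr rfl fun s _ => by push_cast [Nat.cast_sub hm]; ring
    have hq3 : q.eval 0 = ((n.descFactorial i : ℕ) : ℂ) := by
      rw [hqev, descFactorial_cast_prod]
      exact Finset.prod_congr rfl fun s _ => by ring
    -- power bookkeeping
    have pw : ∀ J : ℕ, ((J.descFactorial i : ℕ) : ℂ) * z^(J-i) * z^i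
        = ((J.descFactorial i : ℕ) : ℂ) * z^J := by
      intro J
      by_cases h : i ≤ J
      · rw [mul_assoc, ← pow_add, Nat.sub_add_cancel h]
      · rw [Nat.descFactorial_eq_zero_iff_lt.mpr (by omega), Nat.cast_zero,
          zero_mul, zero_mul, zero_mul]
    -- compute the iterated derivative
    have hiter : Polynomial.derivative^[i] H
        = (∑ m ∈ Finset.Icc 1 n, C (t m:ℂ) *
            ((((n+m).descFactorial i : ℕ) : ℂ[X]) * X^(n+m-i)
              + (((n-m).descFactorial i : ℕ) : ℂ[X]) * X^(n-m-i)))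
          - C (2*(c:ℂ)) * ((((n).descFactorial i : ℕ) : ℂ[X]) * X^(n-i)) := by
      rw [hHdef, Polynomial.iterate_derivative_sub, iterate_derivative_finset_sum,
        Polynomial.iterate_derivative_C_mul, Polynomial.iterate_derivative_X_pow_eq_natCast_mul]
      refine congrArg₂ _ (Finset.sum_congr rfl fun m _ => ?_) rfl
      rw [Polynomial.iterate_derivative_C_mul, iterate_derivative_add',
        Polynomial.iterate_derivative_X_pow_eq_natCast_mul,
        Polynomial.iterate_derivative_X_pow_eq_natCast_mul]
    have hzi : (z:ℂ)^i ≠ 0 := pow_ne_zero _ hzne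
    have heval : (Polynomial.derivative^[i] H).eval z * z^i = 0 := by
      rw [hiter]
      have := hTq q hqd
      rw [← this]
      simp only [Polynomial.eval_sub, Polynomial.eval_finset_sum, Polynomial.eval_mul,
        Polynomial.eval_add, Polynomial.eval_C, Polynomial.eval_natCast, Polynomial.eval_pow,
        Polynomial.eval_X]
      rw [sub_mul, Finset.sum_mul]
      congr 1
      · refine Finset.sum_congr rfl fun m hm => ?_
        have hmn := (Finset.mem_Icc.mp hm).2
        rw [hq1 m, hq2 m hmn]
        have p1 := pw (n+m)
        have p2 := pw (n-m)
        calc (t m:ℂ) * (↑((n+m).descFactorial i) * z^(n+m-i)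
              + ↑((n-m).descFactorial i) * z^(n-m-i)) * z^i
            = (t m:ℂ) * ((↑((n+m).descFactorial i) * z^(n+m-i) * z^i)
              + (↑((n-m).descFactorial i) * z^(n-m-i) * z^i)) := by ring
          _ = (t m:ℂ) * (↑((n+m).descFactorial i) * z^(n+m)
              + ↑((n-m).descFactorial i) * z^(n-m)) := by rw [p1, p2]
      · rw [hq3]
        have p3 := pw n
        calc 2*(c:ℂ) * (↑(n.descFactorial i) * z^(n-i)) * z^i
            = 2*(c:ℂ) * (↑(n.descFactorial i) * z^(n-i) * z^i) := by ring
          _ = 2*(c:ℂ) * (↑(n.descFactorial i) * z^n) := by rw [p3]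
          _ = 2*(c:ℂ) * ↑(n.descFactorial i) * z^n := by ring
    exact (mul_eq_zero.mp heval).resolve_right hzi
  -- multiplicity at least p
  have hlt : p - 1 < H.rootMultiplicity z := by
    refine Polynomial.lt_rootMultiplicity_of_isRoot_iterate_derivative_of_mem_nonZeroDivisors'
      hH0 hroot fun m _ hm0 => ?_
    exact mem_nonZeroDivisors_of_ne_zero (Nat.cast_ne_zero.mpr hm0)
  have hdvd1 : (X - C z)^p ∣ H :=
    dvd_trans (pow_dvd_pow _ (by omega)) (H.pow_rootMultiplicity_dvd z)
  -- the conjugate root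
  set w : ℂ := (starRingEnd ℂ) z with hwdef
  have hzw : z ≠ w := by
    intro h
    apply hs
    have him : z.im = Real.sin k₀ := by
      rw [hzdef]; exact Complex.exp_ofReal_mul_I_im k₀
    have := congrArg Complex.im h
    rw [hwdef, Complex.conj_im] at this
    rw [← him]; linarith
  have hHconj : H.map (starRingEnd ℂ) = H := by
    rw [hHdef]
    simp [Polynomial.map_sub, Polynomial.map_sum, Polynomial.map_mul, Polynomial.map_add,
      Polynomial.map_pow, Polynomial.map_C, Polynomial.map_X, map_mul, map_ofNat,
      Complex.conj_ofReal]
  have hdvd2 : (X - C w)^p ∣ H := by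
    obtain ⟨g, hg⟩ := hdvd1
    refine ⟨g.map (starRingEnd ℂ), ?_⟩
    rw [← hHconj, hg]
    simp [Polynomial.map_mul, Polynomial.map_pow, Polynomial.map_sub, Polynomial.map_C,
      Polynomial.map_X, hwdef]
  have hcop : IsCoprime ((X - C z)^p) ((X - C w)^p) :=
    (Polynomial.isCoprime_X_sub_C_of_isUnit_sub
      (isUnit_iff_ne_zero.mpr (sub_ne_zero.mpr hzw))).pow
  have hdvd : (X - C z)^p * (X - C w)^p ∣ H := hcop.mul_dvd hdvd1 hdvd2
  have hdegle : ((X - C z)^p * (X - C w)^p).natDegree ≤ H.natDegree :=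
    Polynomial.natDegree_le_of_dvd hdvd hH0
  have hdegeq : ((X - C z)^p * (X - C w)^p).natDegree = 2*p := by
    rw [Polynomial.natDegree_mul (pow_ne_zero _ (Polynomial.X_sub_C_ne_zero z))
      (pow_ne_zero _ (Polynomial.X_sub_C_ne_zero w)),
      Polynomial.natDegree_pow, Polynomial.natDegree_pow, Polynomial.natDegree_X_sub_C,
      Polynomial.natDegree_X_sub_C]
    ring
  omega
end
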